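/- For any real numbers t₁, …, t_k, there exist an infinite set A ⊆ ℕ* and a monotonically decreasing sequence ε : A → (0,1) satisfying: n·ε_n → ∞ along A, ε_n → 0 along A, ∑_{n∈A} ε_n²/n < ∞, ∑_{n∈A} ε_n/n = ∞, and ‖n·t_s‖ ≤ ε_n·√k for all n ∈ A and all 1 ≤ s ≤ k. -/

import Mathlib

open Filter

noncomputable def distToInt (x : ℝ) : ℝ := |x - round x|

lemma synd_aux (k : ℕ) (t : Fin k → ℝ) {δ : ℝ} (hδ : 0 < δ) :
    ∃ C : ℕ, 0 < C ∧ ∀ m : ℕ, ∃ n : ℕ, m < n ∧ n ≤ m + C ∧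
      ∀ s : Fin k, distToInt ((n : ℝ) * t s) ≤ δ := by
  set G := Fin k → AddCircle (1:ℝ) with hG
  set x : G := fun s => ((t s : ℝ) : AddCircle (1:ℝ)) with hx
  set U : Set G := {g | ∀ s, ‖g s‖ < δ} with hU
  have hUopen : IsOpen U := by
    have : U = ⋂ s : Fin k, (fun g : G => g s) ⁻¹' Metric.ball 0 δ := by
      ext g; simp [hU, Set.mem_iInter, mem_ball_zero_iff]
    rw [this]
    exact isOpen_iInter_of_finite fun s => (Metric.isOpen_ball).preimage (continuous_apply s)
  have hU0 : (0 : G) ∈ U := by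
    intro s
    show ‖(0:G) s‖ < δ
    rw [show (0:G) s = 0 from rfl, norm_zero]
    exact hδ
  set Z := AddSubgroup.zmultiples x with hZ
  set H := Z.topologicalClosure with hH
  have hHc : IsCompact (H : Set G) := (AddSubgroup.isClosed_topologicalClosure Z).isCompact
  have cover : ∀ h ∈ (H : Set G), ∃ n : ℤ, h + n • x ∈ U := by
    intro h hh
    have h1 : -h ∈ H := neg_mem hh
    have h2 : -h ∈ closure (Z : Set G) := by
      rwa [← AddSubgroup.topologicalClosure_coe]
    have hVopen : IsOpen ((fun g : G => h + g) ⁻¹' U) := hUopen.preimage (continuous_add_left h)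
    have hmem : -h ∈ (fun g : G => h + g) ⁻¹' U := by
      simp only [Set.mem_preimage, add_neg_cancel]; convert hU0 using 1; exact add_neg_cancel h
    obtain ⟨z, hzV, hzZ⟩ := mem_closure_iff.mp h2 _ hVopen hmem
    obtain ⟨n, hn⟩ := AddSubgroup.mem_zmultiples_iff.mp hzZ
    exact ⟨n, by rw [hn]; exact hzV⟩
  have hsub : (H : Set G) ⊆ ⋃ n : ℤ, (fun g : G => g + n • x) ⁻¹' U := by
    intro h hh
    exact Set.mem_iUnion.mpr (cover h hh)
  obtain ⟨F, hF⟩ := hHc.elim_finite_subcover (fun n : ℤ => (fun g : G => g + n • x) ⁻¹' U)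
    (fun n => hUopen.preimage (continuous_add_right _)) hsub
  set N := F.sup Int.natAbs with hN
  refine ⟨2 * N + 1, Nat.succ_pos _, fun m => ?_⟩
  set M : ℤ := (m : ℤ) + N + 1 with hM
  have hMH : (M • x : G) ∈ (H : Set G) :=
    Z.le_topologicalClosure (AddSubgroup.zsmul_mem_zmultiples x M)
  obtain ⟨n, hnF, hnU⟩ := Set.mem_iUnion₂.mp (hF hMH)
  have hnabs : n.natAbs ≤ N := Finset.le_sup hnF
  have hnlb : -(N : ℤ) ≤ n := by omega
  have hnub : n ≤ (N : ℤ) := by omega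
  have hpos : 0 < M + n := by omega
  refine ⟨(M + n).toNat, by omega, by omega, fun s => ?_⟩
  have hmemU : (M + n) • x ∈ U := by
    have h' : M • x + n • x ∈ U := hnU
    rwa [← add_smul] at h'
  have := hmemU s
  have hcoe : ((M + n) • x) s = ((((M + n : ℤ) : ℝ) * t s : ℝ) : AddCircle (1:ℝ)) := by
    show (M + n) • (x s) = _
    rw [hx]
    rw [← zsmul_eq_mul]
    exact (map_zsmul (QuotientAddGroup.mk' (AddSubgroup.zmultiples (1:ℝ))) _ _).symm
  rw [hcoe] at this
  rw [UnitAddCircle.norm_eq] at this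
  have hcast : (((M + n).toNat : ℝ)) = ((M + n : ℤ) : ℝ) := by
    exact_mod_cast congrArg (Int.cast : ℤ → ℝ) (Int.toNat_of_nonneg hpos.le)
  rw [distToInt, hcast]
  exact this.le

open scoped Classical in
noncomputable def stepF (nxt : ℕ → ℕ → ℕ) (s : ℕ × ℕ × ℝ) : ℕ × ℕ × ℝ :=
  if (2:ℝ)^(s.2.1+1) ≤ s.2.2 then
    (nxt (s.2.1+1) (max s.1 ((s.2.1+1) * 2^(s.2.1+2))), s.2.1+1,
      ((nxt (s.2.1+1) (max s.1 ((s.2.1+1) * 2^(s.2.1+2))) : ℕ) : ℝ)⁻¹)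
  else
    (nxt s.2.1 s.1, s.2.1, s.2.2 + ((nxt s.2.1 s.1 : ℕ) : ℝ)⁻¹)

noncomputable def stateF (nxt : ℕ → ℕ → ℕ) : ℕ → ℕ × ℕ × ℝ :=
  fun i => Nat.rec (motive := fun _ => ℕ × ℕ × ℝ)
    (nxt 0 0, 0, ((nxt 0 0 : ℕ) : ℝ)⁻¹) (fun _ s => stepF nxt s) i

lemma stateF_zero (nxt : ℕ → ℕ → ℕ) :
    stateF nxt 0 = (nxt 0 0, 0, ((nxt 0 0 : ℕ) : ℝ)⁻¹) := rfl

lemma stateF_succ (nxt : ℕ → ℕ → ℕ) (i : ℕ) :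
    stateF nxt (i+1) = stepF nxt (stateF nxt i) := rfl

lemma stateF_step (nxt : ℕ → ℕ → ℕ) (i : ℕ) :
    ((2:ℝ)^((stateF nxt i).2.1+1) ≤ (stateF nxt i).2.2 ∧
      (stateF nxt (i+1)).2.1 = (stateF nxt i).2.1 + 1 ∧
      (stateF nxt (i+1)).1 = nxt ((stateF nxt i).2.1+1)
        (max (stateF nxt i).1 (((stateF nxt i).2.1+1) * 2^((stateF nxt i).2.1+2))) ∧
      (stateF nxt (i+1)).2.2 = (((stateF nxt (i+1)).1 : ℕ) : ℝ)⁻¹)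
    ∨ (¬((2:ℝ)^((stateF nxt i).2.1+1) ≤ (stateF nxt i).2.2) ∧
      (stateF nxt (i+1)).2.1 = (stateF nxt i).2.1 ∧
      (stateF nxt (i+1)).1 = nxt (stateF nxt i).2.1 (stateF nxt i).1 ∧
      (stateF nxt (i+1)).2.2 = (stateF nxt i).2.2 + (((stateF nxt (i+1)).1 : ℕ) : ℝ)⁻¹) := by
  by_cases h : (2:ℝ)^((stateF nxt i).2.1+1) ≤ (stateF nxt i).2.2
  · left
    have e : stateF nxt (i+1) =
        (nxt ((stateF nxt i).2.1+1)
          (max (stateF nxt i).1 (((stateF nxt i).2.1+1) * 2^((stateF nxt i).2.1+2))),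
          (stateF nxt i).2.1+1,
          ((nxt ((stateF nxt i).2.1+1)
            (max (stateF nxt i).1 (((stateF nxt i).2.1+1) * 2^((stateF nxt i).2.1+2))) : ℕ) : ℝ)⁻¹) := by
      rw [stateF_succ]
      unfold stepF
      rw [if_pos h]
    refine ⟨h, ?_, ?_, ?_⟩ <;> simp only [e]
  · right
    have e : stateF nxt (i+1) =
        (nxt (stateF nxt i).2.1 (stateF nxt i).1, (stateF nxt i).2.1,
          (stateF nxt i).2.2 + ((nxt (stateF nxt i).2.1 (stateF nxt i).1 : ℕ) : ℝ)⁻¹) := by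
      rw [stateF_succ]
      unfold stepF
      rw [if_neg h]
    refine ⟨h, ?_, ?_, ?_⟩ <;> simp only [e]

lemma arith1 (j : ℕ) {σ : ℝ} (hσ0 : 0 ≤ σ) (hσ : σ ≤ (2:ℝ)^(j+1) + 1) :
    ((2:ℝ)⁻¹ ^ (j+1))^2 * σ ≤ (2:ℝ)⁻¹ ^ j := by
  have hy : (1:ℝ) ≤ 2^j := one_le_pow₀ (by norm_num)
  have hy0 : (0:ℝ) < 2^j := by positivity
  have e1 : ((2:ℝ)⁻¹ ^ (j+1))^2 = ((2 * 2^j)^2)⁻¹ := by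
    rw [inv_pow, ← inv_pow, ← pow_mul]
    congr 1
    rw [pow_succ]
    ring
    simp only [one_div]
  have e2 : (2:ℝ)⁻¹ ^ j = ((2:ℝ)^j)⁻¹ := by rw [inv_pow]
  rw [e1, e2]
  rw [inv_mul_le_iff₀ (by positivity)]
  have hσ' : σ ≤ 2 * 2^j + 1 := by
    rw [pow_succ] at hσ; linarith [hσ]
  have e3 : ((2:ℝ) * 2^j)^2 * ((2:ℝ)^j)⁻¹ = 4 * 2^j := by
    field_simp
    ring
  rw [e3]
  nlinarith [hy, hσ']

theorem stmt11 (k : ℕ) (hk : 0 < k) (t : Fin k → ℝ) :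
    ∃ (A : Set ℕ) (ε : ℕ → ℝ), A.Infinite ∧ (∀ n ∈ A, 0 < n) ∧
      (∀ n ∈ A, ε n ∈ Set.Ioo (0:ℝ) 1) ∧
      (∀ m ∈ A, ∀ n ∈ A, m ≤ n → ε n ≤ ε m) ∧
      Tendsto (fun n : ℕ => (n : ℝ) * ε n) (atTop ⊓ Filter.principal A) atTop ∧
      Tendsto ε (atTop ⊓ Filter.principal A) (nhds 0) ∧
      Summable (fun n : A => (ε n) ^ 2 / (n : ℝ)) ∧
      ¬ Summable (fun n : A => ε n / (n : ℝ)) ∧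
      ∀ n ∈ A, ∀ s : Fin k, distToInt ((n : ℝ) * t s) ≤ ε n * Real.sqrt k := by
  classical
  have key : ∀ j : ℕ, ∃ C : ℕ, 0 < C ∧ ∀ m : ℕ, ∃ n : ℕ, m < n ∧ n ≤ m + C ∧
      ∀ s : Fin k, distToInt ((n : ℝ) * t s) ≤ (2:ℝ)⁻¹ ^ (j+1) :=
    fun j => synd_aux k t (by positivity)
  choose C hC using key
  choose nxt hlt hle happ using fun j => (hC j).2
  -- basic facts
  have hapos : ∀ i, 0 < (stateF nxt i).1 := by
    intro i
    cases i with
    | zero => exact Nat.lt_of_le_of_lt (Nat.zero_le 0) (hlt 0 0)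
    | succ i =>
      rcases stateF_step nxt i with ⟨_, _, hA1, _⟩ | ⟨_, _, hA1, _⟩ <;>
        rw [hA1] <;> exact Nat.lt_of_le_of_lt (Nat.zero_le _) (hlt _ _)
  have hasucc : ∀ i, (stateF nxt i).1 < (stateF nxt (i+1)).1 := by
    intro i
    rcases stateF_step nxt i with ⟨_, _, hA1, _⟩ | ⟨_, _, hA1, _⟩
    · rw [hA1]
      exact Nat.lt_of_le_of_lt (le_max_left _ _) (hlt _ _)
    · rw [hA1]; exact hlt _ _
  have haSM : StrictMono (fun i => (stateF nxt i).1) := strictMono_nat_of_lt_succ hasucc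
  have hainj : Function.Injective (fun i => (stateF nxt i).1) := haSM.injective
  have hJsucc : ∀ i, (stateF nxt i).2.1 ≤ (stateF nxt (i+1)).2.1 := by
    intro i
    rcases stateF_step nxt i with ⟨_, hJ1, _, _⟩ | ⟨_, hJ1, _, _⟩ <;> omega
  have hJmono : ∀ i i', i ≤ i' → (stateF nxt i).2.1 ≤ (stateF nxt i').2.1 :=
    fun i i' h => monotone_nat_of_le_succ hJsucc h
  have hbound : ∀ i, (stateF nxt i).2.1 * 2^((stateF nxt i).2.1 + 1) < (stateF nxt i).1 := by
    intro i
    induction i with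
    | zero => simpa [stateF_zero] using hapos 0
    | succ i ih =>
      rcases stateF_step nxt i with ⟨_, hJ1, hA1, _⟩ | ⟨_, hJ1, hA1, _⟩
      · rw [hJ1, hA1]
        exact Nat.lt_of_le_of_lt (le_max_right _ _) (hlt _ _)
      · rw [hJ1]
        exact Nat.lt_trans ih (hasucc i)
  have happrox : ∀ i s, distToInt (((stateF nxt i).1 : ℝ) * t s) ≤
      (2:ℝ)⁻¹ ^ ((stateF nxt i).2.1 + 1) := by
    intro i s
    cases i with
    | zero => exact happ 0 0 s
    | succ i =>
      rcases stateF_step nxt i with ⟨_, hJ1, hA1, _⟩ | ⟨_, hJ1, hA1, _⟩ <;>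
        rw [hJ1, hA1] <;> exact happ _ _ s
  have hainv : ∀ i, (0:ℝ) < ((stateF nxt i).1 : ℝ)⁻¹ ∧ (((stateF nxt i).1 : ℝ))⁻¹ ≤ 1 := by
    intro i
    have h1 : (1:ℝ) ≤ ((stateF nxt i).1 : ℝ) := by exact_mod_cast hapos i
    constructor
    · positivity
    · exact inv_le_one_of_one_le₀ h1
  have hsg : ∀ i, 0 < (stateF nxt i).2.2 ∧
      (stateF nxt i).2.2 ≤ (2:ℝ)^((stateF nxt i).2.1 + 1) + 1 := by
    intro i
    induction i with
    | zero =>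
      rw [stateF_zero]
      constructor
      · exact (hainv 0).1
      · have := (hainv 0).2
        rw [stateF_zero] at this
        have h2 : (1:ℝ) ≤ (2:ℝ)^(0+1) + 1 := by norm_num
        exact le_trans this h2
    | succ i ih =>
      rcases stateF_step nxt i with ⟨hc, hJ1, hA1, hS1⟩ | ⟨hc, hJ1, hA1, hS1⟩
      · rw [hS1]
        refine ⟨(hainv (i+1)).1, le_trans (hainv (i+1)).2 ?_⟩
        have : (0:ℝ) < (2:ℝ)^((stateF nxt (i+1)).2.1+1) := by positivity
        linarith
      · rw [hS1, hJ1]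
        push_neg at hc
        have := (hainv (i+1)).2
        have h0 := (hainv (i+1)).1
        exact ⟨by linarith [ih.1], by linarith⟩
  -- J is unbounded
  have hJstep : ∀ i, ∃ i', i ≤ i' ∧ (stateF nxt i).2.1 < (stateF nxt i').2.1 := by
    intro i
    by_contra hcon
    push_neg at hcon
    have hconst : ∀ i', i ≤ i' → (stateF nxt i').2.1 = (stateF nxt i).2.1 :=
      fun i' h => le_antisymm (hcon i' h) (hJmono i i' h)
    have hstay : ∀ i', i ≤ i' →
        ¬((2:ℝ)^((stateF nxt i').2.1+1) ≤ (stateF nxt i').2.2) ∧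
        (stateF nxt (i'+1)).1 = nxt (stateF nxt i').2.1 (stateF nxt i').1 ∧
        (stateF nxt (i'+1)).2.2 = (stateF nxt i').2.2 + (((stateF nxt (i'+1)).1 : ℕ) : ℝ)⁻¹ := by
      intro i' h
      rcases stateF_step nxt i' with ⟨hc, hJ1, hA1, hS1⟩ | ⟨hc, hJ1, hA1, hS1⟩
      · exfalso
        have e1 := hconst (i'+1) (le_trans h (Nat.le_succ i'))
        have e2 := hconst i' h
        omega
      · exact ⟨hc, hA1, hS1⟩
    have hgap : ∀ r, (stateF nxt (i+r)).1 ≤ (stateF nxt i).1 + r * C ((stateF nxt i).2.1) := by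
      intro r
      induction r with
      | zero => simp
      | succ r ih =>
        have hst := hstay (i+r) (Nat.le_add_right _ _)
        have e3 := hconst (i+r) (Nat.le_add_right _ _)
        have h4 : (stateF nxt (i+r+1)).1 ≤ (stateF nxt (i+r)).1 + C ((stateF nxt i).2.1) := by
          rw [hst.2.1, e3]
          exact hle _ _
        have e4 : i + (r+1) = (i+r)+1 := by omega
        rw [e4]
        have hmul : (r+1) * C ((stateF nxt i).2.1) =
            r * C ((stateF nxt i).2.1) + C ((stateF nxt i).2.1) := by ring
        omega
    have hsum : ∀ r, (stateF nxt i).2.2 +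
        (((stateF nxt i).1 : ℝ) + (C ((stateF nxt i).2.1) : ℝ))⁻¹ *
          (∑ r' ∈ Finset.range r, ((r' : ℝ) + 1)⁻¹) ≤ (stateF nxt (i+r)).2.2 := by
      intro r
      induction r with
      | zero => simp
      | succ r ih =>
        have hst := hstay (i+r) (Nat.le_add_right _ _)
        have e5 : i + (r+1) = (i+r)+1 := by omega
        rw [e5, hst.2.2]
        have hub : ((stateF nxt (i+r+1)).1 : ℝ) ≤
            (((stateF nxt i).1 : ℝ) + (C ((stateF nxt i).2.1) : ℝ)) * ((r : ℝ) + 1) := by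
          have h6 := hgap (r+1)
          have h7 : (stateF nxt (i+(r+1))).1 ≤
              ((stateF nxt i).1 + C ((stateF nxt i).2.1)) * (r+1) := by
            have h8 : (stateF nxt i).1 + (r+1) * C ((stateF nxt i).2.1) ≤
                ((stateF nxt i).1 + C ((stateF nxt i).2.1)) * (r+1) := by nlinarith
            omega
          rw [e5] at h7
          exact_mod_cast h7
        have hP : (0:ℝ) < ((stateF nxt i).1 : ℝ) + (C ((stateF nxt i).2.1) : ℝ) := by
          have := hapos i
          have : (0:ℝ) < ((stateF nxt i).1 : ℝ) := by exact_mod_cast this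
          have hCn : (0:ℝ) ≤ (C ((stateF nxt i).2.1) : ℝ) := by positivity
          linarith
        have hinv : ((((stateF nxt i).1 : ℝ) + (C ((stateF nxt i).2.1) : ℝ)) * ((r:ℝ)+1))⁻¹ ≤
            ((stateF nxt (i+r+1)).1 : ℝ)⁻¹ := by
          apply inv_anti₀
          · exact_mod_cast hapos (i+r+1)
          · exact hub
        rw [Finset.sum_range_succ, mul_add]
        have := ih
        have hfin : (((stateF nxt i).1 : ℝ) + (C ((stateF nxt i).2.1) : ℝ))⁻¹ *
            (((r:ℝ)+1)⁻¹) ≤ ((stateF nxt (i+r+1)).1 : ℝ)⁻¹ := by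
          rw [← mul_inv]
          exact hinv
        linarith
    -- harmonic divergence gives contradiction
    set P : ℝ := ((stateF nxt i).1 : ℝ) + (C ((stateF nxt i).2.1) : ℝ) with hP
    have hP0 : (0:ℝ) < P := by
      have h1 : (0:ℝ) < ((stateF nxt i).1 : ℝ) := by exact_mod_cast hapos i
      have h2 : (0:ℝ) ≤ (C ((stateF nxt i).2.1) : ℝ) := by positivity
      rw [hP]; linarith
    obtain ⟨R, hR⟩ : ∃ R, P * (2:ℝ)^((stateF nxt i).2.1+1) ≤
        ∑ r' ∈ Finset.range R, ((r' : ℝ) + 1)⁻¹ := by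
      have ht := Real.tendsto_sum_range_one_div_nat_succ_atTop
      have ht2 := (ht.eventually_ge_atTop (P * (2:ℝ)^((stateF nxt i).2.1+1))).exists
      obtain ⟨R, hR⟩ := ht2
      refine ⟨R, ?_⟩
      have : ∑ r' ∈ Finset.range R, (1 / ((r' : ℝ) + 1)) =
          ∑ r' ∈ Finset.range R, ((r' : ℝ) + 1)⁻¹ := by
        apply Finset.sum_congr rfl
        intro x _
        rw [one_div]
      rw [← this]
      exact hR
    have h9 := hsum R
    have h10 := (hstay (i+R) (Nat.le_add_right _ _)).1
    rw [hconst (i+R) (Nat.le_add_right _ _)] at h10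
    push_neg at h10
    have h11 : P⁻¹ * (P * (2:ℝ)^((stateF nxt i).2.1+1)) = (2:ℝ)^((stateF nxt i).2.1+1) := by
      field_simp
    have h12 : P⁻¹ * (P * (2:ℝ)^((stateF nxt i).2.1+1)) ≤
        P⁻¹ * (∑ r' ∈ Finset.range R, ((r' : ℝ) + 1)⁻¹) := by
      apply mul_le_mul_of_nonneg_left hR
      positivity
    have h13 := (hsg i).1
    rw [h11] at h12
    linarith
  have hJunbdd : ∀ b : ℕ, ∃ i, b ≤ (stateF nxt i).2.1 := by
    intro b
    induction b with
    | zero => exact ⟨0, Nat.zero_le _⟩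
    | succ b ih =>
      obtain ⟨i, hi⟩ := ih
      obtain ⟨i', hii', hlt'⟩ := hJstep i
      exact ⟨i', by omega⟩
  -- summability invariants
  have hPhi : ∀ i, ∑ i' ∈ Finset.range (i+1),
      ((2:ℝ)⁻¹ ^ ((stateF nxt i').2.1 + 1))^2 * ((stateF nxt i').1 : ℝ)⁻¹ ≤
      (∑ j' ∈ Finset.range ((stateF nxt i).2.1), (2:ℝ)⁻¹ ^ j') +
        ((2:ℝ)⁻¹ ^ ((stateF nxt i).2.1 + 1))^2 * (stateF nxt i).2.2 := by
    intro i
    induction i with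
    | zero =>
      rw [Finset.sum_range_one, stateF_zero]
      simp
    | succ i ih =>
      rw [Finset.sum_range_succ]
      rcases stateF_step nxt i with ⟨hc, hJ1, hA1, hS1⟩ | ⟨hc, hJ1, hA1, hS1⟩
      · rw [hJ1, hS1, Finset.sum_range_succ (fun j' => (2:ℝ)⁻¹ ^ j')]
        have harith := arith1 ((stateF nxt i).2.1) (hsg i).1.le (hsg i).2
        linarith [ih]
      · rw [hJ1, hS1]
        have hexp : ((2:ℝ)⁻¹ ^ ((stateF nxt i).2.1 + 1))^2 *
            ((stateF nxt i).2.2 + ((stateF nxt (i+1)).1 : ℝ)⁻¹) =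
            ((2:ℝ)⁻¹ ^ ((stateF nxt i).2.1 + 1))^2 * (stateF nxt i).2.2 +
            ((2:ℝ)⁻¹ ^ ((stateF nxt i).2.1 + 1))^2 * ((stateF nxt (i+1)).1 : ℝ)⁻¹ := by ring
        rw [hexp]
        linarith [ih]
  have hsummable : Summable (fun i : ℕ =>
      ((2:ℝ)⁻¹ ^ ((stateF nxt i).2.1 + 1))^2 * ((stateF nxt i).1 : ℝ)⁻¹) := by
    refine summable_of_sum_range_le (c := 3) (fun n => by positivity) (fun R => ?_)
    cases R with
    | zero => norm_num
    | succ i =>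
      have h1 := hPhi i
      have h2 : (∑ j' ∈ Finset.range ((stateF nxt i).2.1), (2:ℝ)⁻¹ ^ j') ≤ 2 := by
        have := sum_geometric_two_le ((stateF nxt i).2.1)
        simpa [one_div] using this
      have h3 := arith1 ((stateF nxt i).2.1) (hsg i).1.le (hsg i).2
      have h4 : (2:ℝ)⁻¹ ^ ((stateF nxt i).2.1) ≤ 1 := by
        apply pow_le_one₀ <;> norm_num
      linarith
  have hPsi : ∀ i, ((stateF nxt i).2.1 : ℝ) +
      (2:ℝ)⁻¹ ^ ((stateF nxt i).2.1 + 1) * (stateF nxt i).2.2 ≤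
      ∑ i' ∈ Finset.range (i+1),
        (2:ℝ)⁻¹ ^ ((stateF nxt i').2.1 + 1) * ((stateF nxt i').1 : ℝ)⁻¹ := by
    intro i
    induction i with
    | zero =>
      rw [Finset.sum_range_one, stateF_zero]
      simp
    | succ i ih =>
      rw [Finset.sum_range_succ]
      rcases stateF_step nxt i with ⟨hc, hJ1, hA1, hS1⟩ | ⟨hc, hJ1, hA1, hS1⟩
      · rw [hJ1, hS1]
        push_cast
        have hone : (2:ℝ)⁻¹ ^ ((stateF nxt i).2.1 + 1) * (2:ℝ) ^ ((stateF nxt i).2.1 + 1) = 1 := by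
          rw [inv_pow, inv_mul_cancel₀ (by positivity)]
        have h5 : (1:ℝ) ≤ (2:ℝ)⁻¹ ^ ((stateF nxt i).2.1 + 1) * (stateF nxt i).2.2 := by
          calc (1:ℝ) = (2:ℝ)⁻¹ ^ ((stateF nxt i).2.1 + 1) * (2:ℝ) ^ ((stateF nxt i).2.1 + 1) :=
                hone.symm
          _ ≤ _ := by
            apply mul_le_mul_of_nonneg_left hc
            positivity
        linarith [ih]
      · rw [hJ1, hS1]
        have hexp : (2:ℝ)⁻¹ ^ ((stateF nxt i).2.1 + 1) *
            ((stateF nxt i).2.2 + ((stateF nxt (i+1)).1 : ℝ)⁻¹) =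
            (2:ℝ)⁻¹ ^ ((stateF nxt i).2.1 + 1) * (stateF nxt i).2.2 +
            (2:ℝ)⁻¹ ^ ((stateF nxt i).2.1 + 1) * ((stateF nxt (i+1)).1 : ℝ)⁻¹ := by ring
        rw [hexp]
        linarith [ih]
  have hidx : ∀ i, Function.invFun (fun i => (stateF nxt i).1) ((stateF nxt i).1) = i :=
    fun i => Function.leftInverse_invFun hainj i
  refine ⟨Set.range (fun i => (stateF nxt i).1),
    fun n => (2:ℝ)⁻¹ ^ ((stateF nxt (Function.invFun (fun i => (stateF nxt i).1) n)).2.1 + 1),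
    ?_, ?_, ?_, ?_, ?_, ?_, ?_, ?_, ?_⟩
  · exact Set.infinite_range_of_injective hainj
  · rintro n ⟨i, rfl⟩
    exact hapos i
  · rintro n ⟨i, rfl⟩
    simp only [Set.mem_Ioo, hidx]
    constructor
    · positivity
    · exact pow_lt_one₀ (by norm_num) (by norm_num) (Nat.succ_ne_zero _)
  · rintro m ⟨i, rfl⟩ n ⟨i', rfl⟩ hmn
    simp only [hidx]
    have hii' : i ≤ i' := haSM.le_iff_le.mp hmn
    exact pow_le_pow_of_le_one (by norm_num) (by norm_num)
      (by have := hJmono i i' hii'; omega)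
  · rw [tendsto_atTop]
    intro b
    obtain ⟨bn, hbn⟩ := exists_nat_ge b
    obtain ⟨i0, hi0⟩ := hJunbdd bn
    rw [eventually_inf_principal]
    filter_upwards [eventually_ge_atTop ((stateF nxt i0).1)] with n hn hnA
    obtain ⟨i, hi⟩ := hnA
    simp only at hi
    subst hi
    simp only [hidx]
    have hii0 : i0 ≤ i := haSM.le_iff_le.mp hn
    have hJi : bn ≤ (stateF nxt i).2.1 := le_trans hi0 (hJmono i0 i hii0)
    have hcast : ((stateF nxt i).2.1 : ℝ) * 2^((stateF nxt i).2.1 + 1) <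
        ((stateF nxt i).1 : ℝ) := by exact_mod_cast hbound i
    have hone : (2:ℝ)^((stateF nxt i).2.1 + 1) * (2:ℝ)⁻¹ ^ ((stateF nxt i).2.1 + 1) = 1 := by
      rw [inv_pow, mul_inv_cancel₀ (by positivity)]
    have hq : (0:ℝ) < (2:ℝ)⁻¹ ^ ((stateF nxt i).2.1 + 1) := by positivity
    calc b ≤ (bn:ℝ) := hbn
    _ ≤ ((stateF nxt i).2.1 : ℝ) := by exact_mod_cast hJi
    _ = ((stateF nxt i).2.1 : ℝ) *
        ((2:ℝ)^((stateF nxt i).2.1+1) * (2:ℝ)⁻¹^((stateF nxt i).2.1+1)) := by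
        rw [hone, mul_one]
    _ = (((stateF nxt i).2.1 : ℝ) * (2:ℝ)^((stateF nxt i).2.1+1)) *
        (2:ℝ)⁻¹^((stateF nxt i).2.1+1) := by ring
    _ ≤ ((stateF nxt i).1 : ℝ) * (2:ℝ)⁻¹^((stateF nxt i).2.1+1) :=
        mul_le_mul_of_nonneg_right hcast.le hq.le
  · rw [Metric.tendsto_nhds]
    intro d hd
    obtain ⟨bn, hbn⟩ := exists_pow_lt_of_lt_one hd (by norm_num : (2:ℝ)⁻¹ < 1)
    obtain ⟨i0, hi0⟩ := hJunbdd bn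
    rw [eventually_inf_principal]
    filter_upwards [eventually_ge_atTop ((stateF nxt i0).1)] with n hn hnA
    obtain ⟨i, hi⟩ := hnA
    simp only at hi
    subst hi
    simp only [hidx]
    rw [Real.dist_eq, sub_zero, abs_of_pos (by positivity)]
    have hii0 : i0 ≤ i := haSM.le_iff_le.mp hn
    have hJi : bn ≤ (stateF nxt i).2.1 + 1 := by
      have := hJmono i0 i hii0; omega
    calc (2:ℝ)⁻¹ ^ ((stateF nxt i).2.1 + 1) ≤ (2:ℝ)⁻¹ ^ bn :=
        pow_le_pow_of_le_one (by norm_num) (by norm_num) hJi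
    _ < d := hbn
  · refine (Equiv.summable_iff (Equiv.ofInjective _ hainj)).mp (hsummable.congr fun i => ?_)
    simp only [Function.comp_apply, Equiv.ofInjective_apply, hidx, div_eq_mul_inv]
    try ring
  · intro hS
    have hS2 : Summable (fun i : ℕ =>
        (2:ℝ)⁻¹ ^ ((stateF nxt i).2.1 + 1) * ((stateF nxt i).1 : ℝ)⁻¹) := by
      have h := (Equiv.summable_iff (Equiv.ofInjective _ hainj)).mpr hS
      refine h.congr fun i => ?_
      simp only [Function.comp_apply, Equiv.ofInjective_apply, hidx, div_eq_mul_inv]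
      try ring
    obtain ⟨b, hb⟩ := exists_nat_ge (∑' i : ℕ,
      (2:ℝ)⁻¹ ^ ((stateF nxt i).2.1 + 1) * ((stateF nxt i).1 : ℝ)⁻¹)
    obtain ⟨i, hi⟩ := hJunbdd (b+1)
    have hle2 : ∑ i' ∈ Finset.range (i+1),
        (2:ℝ)⁻¹ ^ ((stateF nxt i').2.1 + 1) * ((stateF nxt i').1 : ℝ)⁻¹ ≤
        ∑' i' : ℕ, (2:ℝ)⁻¹ ^ ((stateF nxt i').2.1 + 1) * ((stateF nxt i').1 : ℝ)⁻¹ :=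
      Summable.sum_le_tsum _ (fun _ _ => by positivity) hS2
    have h1 := hPsi i
    have hpos2 : 0 < (2:ℝ)⁻¹ ^ ((stateF nxt i).2.1 + 1) * (stateF nxt i).2.2 :=
      mul_pos (by positivity) (hsg i).1
    have hcast : ((b:ℝ)+1) ≤ ((stateF nxt i).2.1 : ℝ) := by exact_mod_cast hi
    linarith
  · rintro n ⟨i, rfl⟩ s
    simp only [hidx]
    have h1 := happrox i s
    have hsq : (1:ℝ) ≤ Real.sqrt k := Real.one_le_sqrt.mpr (by exact_mod_cast hk)
    calc distToInt (((stateF nxt i).1 : ℝ) * t s) ≤ (2:ℝ)⁻¹ ^ ((stateF nxt i).2.1 + 1) := h1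
    _ = (2:ℝ)⁻¹ ^ ((stateF nxt i).2.1 + 1) * 1 := by ring
    _ ≤ (2:ℝ)⁻¹ ^ ((stateF nxt i).2.1 + 1) * Real.sqrt k :=
        mul_le_mul_of_nonneg_left hsq (by positivity)
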